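/- Define T(n,k) by T(n,0)=T(n,n)=1 and T(n,k)=2T(n-1,k-1)+T(n-1,k) for 0<k<n. Then for all 1 ≤ k ≤ n, T(n,k-1) + T(n,k) = 2^k · C(n,k). -/
import Mathlib


/-- Sloane's A119258: `T n 0 = T n n = 1` and `T n k = 2 T (n-1) (k-1) + T (n-1) k`
for `0 < k < n`, with `T n k = 0` for `k > n`. -/
def T : ℕ → ℕ → ℤ
  | _, 0 => 1
  | 0, _ + 1 => 0
  | n + 1, k + 1 =>
    if n + 1 ≤ k + 1 then (if k + 1 = n + 1 then 1 else 0)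
    else 2 * T n k + T n (k + 1)

lemma T_zero (n : ℕ) : T n 0 = 1 := by cases n <;> rfl

lemma T_self (n : ℕ) : T n n = 1 := by
  cases n with
  | zero => rfl
  | succ m => simp [T]

lemma T_rec (n k : ℕ) (h : k + 1 ≤ n) :
    T (n + 1) (k + 1) = 2 * T n k + T n (k + 1) := by
  rw [T]
  rw [if_neg (by omega)]

lemma stmt3_aux (n : ℕ) : ∀ k, 1 ≤ k → k ≤ n →
    T n (k - 1) + T n k = 2 ^ k * (n.choose k : ℤ) := by
  induction n with
  | zero => intro k h1 h2; omega
  | succ n ih =>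
    intro k h1 h2
    rcases Nat.lt_or_ge k (n + 1) with hk | hk
    · -- k ≤ n
      have hkn : k ≤ n := by omega
      obtain ⟨m, rfl⟩ : ∃ m, k = m + 1 := ⟨k - 1, by omega⟩
      simp only [Nat.add_sub_cancel]
      rw [T_rec n m (by omega)]
      rcases Nat.eq_zero_or_pos m with rfl | hm
      · have h1' : T n 1 = 2 * n - 1 := by
          have := ih 1 (by omega) (by omega)
          simp [T_zero] at this
          linarith
        rw [T_zero, T_zero, h1']
        have : ((n + 1).choose 1 : ℤ) = n + 1 := by simp
        rw [this]; ring
      · -- m ≥ 1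
        obtain ⟨j, rfl⟩ : ∃ j, m = j + 1 := ⟨m - 1, by omega⟩
        rw [T_rec n j (by omega)]
        have ih1 := ih (j + 1) (by omega) (by omega)
        have ih2 := ih (j + 2) (by omega) (by omega)
        simp only [Nat.add_sub_cancel] at ih1 ih2
        have hp : ((n + 1).choose (j + 2) : ℤ) = n.choose (j + 1) + n.choose (j + 2) := by
          have := Nat.choose_succ_succ n (j + 1)
          push_cast [this]
          ring
        rw [hp]
        have : T n j + T n (j + 1) = 2 ^ (j + 1) * (n.choose (j + 1) : ℤ) := by
          simpa using ih1
        have h2' : T n (j + 1) + T n (j + 2) = 2 ^ (j + 2) * (n.choose (j + 2) : ℤ) := by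
          simpa using ih2
        linear_combination 2 * this + h2'
    · -- k = n + 1
      have hk' : k = n + 1 := by omega
      subst hk'
      simp only [Nat.add_sub_cancel, T_self, Nat.choose_self, Nat.cast_one, mul_one]
      rcases Nat.eq_zero_or_pos n with rfl | hn
      · simp [T_zero]
      · obtain ⟨j, rfl⟩ : ∃ j, n = j + 1 := ⟨n - 1, by omega⟩
        rw [T_rec (j + 1) j (by omega)]
        have ihh := ih (j + 1) (by omega) (by omega)
        simp only [Nat.add_sub_cancel, Nat.choose_self, Nat.cast_one, mul_one] at ihh
        rw [T_self] at ihh ⊢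
        linear_combination 2 * ihh

theorem stmt3 (n k : ℕ) (h1 : 1 ≤ k) (h2 : k ≤ n) :
    T n (k - 1) + T n k = 2 ^ k * (n.choose k : ℤ) :=
  stmt3_aux n k h1 h2
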